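/- For simple random sampling without replacement of size n ≥ 3 from a finite real population of size N ≥ 3, E[μ̂_3] = ((1−n⁻¹)(1−2n⁻¹))/((1−N⁻¹)(1−2N⁻¹)) μ_3, where μ̂_3 = (1/n)∑(X_i−X̄)³ and μ_3 = (1/N)∑(x_j−μ)³. -/

import Mathlib

open Finset

/-- Expectation under simple random sampling without replacement: the average of `g`
over all ordered samples of `n` distinct indices (i.e. embeddings `Fin n ↪ Fin N`),
each equally likely. -/
noncomputable def srsExp (N n : ℕ) (g : (Fin n ↪ Fin N) → ℝ) : ℝ :=
  (∑ σ : Fin n ↪ Fin N, g σ) / (Fintype.card (Fin n ↪ Fin N))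

namespace SRS3

open Function

def emb1 {n : ℕ} (i : Fin n) : Fin 1 ↪ Fin n :=
  ⟨fun _ => i, fun a b _ => Subsingleton.elim a b⟩

def emb2 {n : ℕ} (i j : Fin n) (h : i ≠ j) : Fin 2 ↪ Fin n :=
  ⟨![i, j], by intro a b hab; fin_cases a <;> fin_cases b <;> simp_all⟩

def emb3 {n : ℕ} (i j k : Fin n) (hij : i ≠ j) (hik : i ≠ k) (hjk : j ≠ k) :
    Fin 3 ↪ Fin n :=
  ⟨![i, j, k], by
    intro a b hab
    fin_cases a <;> fin_cases b <;> simp_all [hij, hik, hjk, hij.symm, hik.symm, hjk.symm]⟩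

lemma exists_perm_comp {m N : ℕ} (τ τ' : Fin m ↪ Fin N) :
    ∃ π : Equiv.Perm (Fin N), ∀ i, π (τ i) = τ' i := by
  classical
  let e : {x // x ∈ Set.range τ} ≃ {x // x ∈ Set.range τ'} :=
    (Equiv.ofInjective τ τ.injective).symm.trans (Equiv.ofInjective τ' τ'.injective)
  refine ⟨e.extendSubtype, fun i => ?_⟩
  rw [e.extendSubtype_apply_of_mem (τ i) ⟨i, rfl⟩]
  show τ' ((Equiv.ofInjective τ τ.injective).symm ⟨τ i, _⟩) = τ' i
  congr 1
  exact (Equiv.ofInjective τ τ.injective).symm_apply_apply i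

lemma master {N n : ℕ} (m : ℕ) (hm : m ≤ N) (t : Fin m ↪ Fin n)
    (F : (Fin m ↪ Fin N) → ℝ) :
    ∑ σ : Fin n ↪ Fin N, F (t.trans σ)
      = (Fintype.card (Fin n ↪ Fin N) : ℝ) / (Fintype.card (Fin m ↪ Fin N)) * ∑ τ, F τ := by
  classical
  set c : (Fin m ↪ Fin N) → ℕ :=
    fun τ => (univ.filter (fun σ : Fin n ↪ Fin N => t.trans σ = τ)).card with hc
  have hconst : ∀ τ τ', c τ = c τ' := by
    intro τ τ'
    obtain ⟨π, hπ⟩ := exists_perm_comp τ τ'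
    refine Finset.card_nbij' (fun σ => σ.trans π.toEmbedding)
      (fun σ => σ.trans π.symm.toEmbedding) ?_ ?_ ?_ ?_
    · intro σ hσ
      simp only [mem_coe, mem_filter, mem_univ, true_and] at hσ ⊢
      ext i
      have := congrArg (fun (e : Fin m ↪ Fin N) => e i) hσ
      simp only [Embedding.trans_apply, Equiv.coe_toEmbedding] at this ⊢
      rw [this, hπ]
    · intro σ hσ
      simp only [mem_coe, mem_filter, mem_univ, true_and] at hσ ⊢
      ext i
      have := congrArg (fun (e : Fin m ↪ Fin N) => e i) hσ
      simp only [Embedding.trans_apply, Equiv.coe_toEmbedding] at this ⊢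
      rw [this, ← hπ i, Equiv.symm_apply_apply]
    · intro σ _; ext i; simp
    · intro σ _; ext i; simp
  set τ₀ : Fin m ↪ Fin N := (Fin.castLEOrderEmb hm).toEmbedding with hτ₀
  have hfib : ∑ τ : Fin m ↪ Fin N, (c τ : ℝ) * F τ = ∑ σ, F (t.trans σ) := by
    rw [← Finset.sum_fiberwise univ (fun σ : Fin n ↪ Fin N => t.trans σ) (fun σ => F (t.trans σ))]
    refine Finset.sum_congr rfl fun τ _ => ?_
    rw [Finset.sum_congr rfl (fun σ hσ => by
      simp only [mem_filter] at hσ; rw [hσ.2] : ∀ σ ∈ univ.filter (fun σ : Fin n ↪ Fin N => t.trans σ = τ), F (t.trans σ) = F τ)]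
    rw [Finset.sum_const, nsmul_eq_mul]
  have htot : ∑ τ : Fin m ↪ Fin N, c τ = Fintype.card (Fin n ↪ Fin N) := by
    rw [Fintype.card, Finset.card_eq_sum_card_fiberwise
      (f := fun σ : Fin n ↪ Fin N => t.trans σ) (t := univ) (fun _ _ => mem_univ _)]
  have hconst' : ∀ τ, c τ = c τ₀ := fun τ => hconst τ τ₀
  have hcard : (Fintype.card (Fin m ↪ Fin N)) * c τ₀ = Fintype.card (Fin n ↪ Fin N) := by
    rw [← htot]
    rw [Finset.sum_congr rfl (fun τ _ => hconst' τ), Finset.sum_const, smul_eq_mul, Fintype.card]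
  have hpos : (0:ℝ) < Fintype.card (Fin m ↪ Fin N) := by
    have h0 : 0 < Fintype.card (Fin m ↪ Fin N) := by
      rw [Fintype.card_embedding_eq]
      simp only [Fintype.card_fin]
      exact Nat.pos_of_ne_zero fun h =>
        absurd (Nat.descFactorial_eq_zero_iff_lt.mp h) (not_lt.mpr hm)
    exact_mod_cast h0
  rw [← hfib, Finset.sum_congr rfl (fun τ _ => by rw [hconst' τ]), ← Finset.mul_sum]
  congr 1
  rw [← hcard, Nat.cast_mul, mul_div_cancel_left₀ _ (ne_of_gt hpos)]

lemma sum_emb1 {N : ℕ} (G : Fin N → ℝ) : ∑ τ : Fin 1 ↪ Fin N, G (τ 0) = ∑ j, G j := by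
  apply Fintype.sum_bijective (fun τ : Fin 1 ↪ Fin N => τ 0)
  · constructor
    · intro a b hab; ext i
      have h0 : i = 0 := Subsingleton.elim _ _
      rw [h0]; exact congrArg Fin.val hab
    · intro j; exact ⟨emb1 j, rfl⟩
  · intro τ; rfl

lemma sum_emb2 {N : ℕ} (G : Fin N → Fin N → ℝ) :
    ∑ τ : Fin 2 ↪ Fin N, G (τ 0) (τ 1) = ∑ j, ∑ k ∈ univ.erase j, G j k := by
  classical
  have hs : ∑ j, ∑ k ∈ univ.erase j, G j k
      = ∑ p ∈ (univ.sigma fun j => univ.erase j), G p.1 p.2 :=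
    Finset.sum_sigma' _ _ _
  rw [hs]
  refine Finset.sum_bij' (fun (τ : Fin 2 ↪ Fin N) _ => (⟨τ 0, τ 1⟩ : Σ _ : Fin N, Fin N))
    (fun p hp => emb2 p.1 p.2 ?_) ?_ ?_ ?_ ?_ ?_
  · simp only [Finset.mem_sigma, Finset.mem_erase] at hp
    exact fun h => hp.2.1 (h ▸ rfl)
  · intro τ _
    simp only [Finset.mem_sigma, Finset.mem_univ, Finset.mem_erase, true_and, and_true]
    intro h
    have := τ.injective h
    simp at this
  · intro p hp; exact Finset.mem_univ _
  · intro τ _; ext a; fin_cases a <;> rfl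
  · intro p hp; rfl
  · intro τ _; rfl

lemma sum_emb3 {N : ℕ} (G : Fin N → Fin N → Fin N → ℝ) :
    ∑ τ : Fin 3 ↪ Fin N, G (τ 0) (τ 1) (τ 2)
      = ∑ j, ∑ k ∈ univ.erase j, ∑ l ∈ (univ.erase j).erase k, G j k l := by
  classical
  have hs : ∑ j, ∑ k ∈ univ.erase j, ∑ l ∈ (univ.erase j).erase k, G j k l
      = ∑ p ∈ (univ.sigma fun j => (univ.erase j).sigma fun k => (univ.erase j).erase k),
          G p.1 p.2.1 p.2.2 := by
    rw [Finset.sum_sigma]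
    refine Finset.sum_congr rfl fun j _ => ?_
    rw [Finset.sum_sigma]
  rw [hs]
  refine Finset.sum_bij' (fun (τ : Fin 3 ↪ Fin N) _ =>
      (⟨τ 0, τ 1, τ 2⟩ : Σ _ : Fin N, Σ _ : Fin N, Fin N))
    (fun p hp => emb3 p.1 p.2.1 p.2.2 ?_ ?_ ?_) ?_ ?_ ?_ ?_ ?_
  · simp only [Finset.mem_sigma, Finset.mem_erase, Finset.mem_univ, true_and, and_true] at hp
    obtain ⟨h1, h2, h3⟩ := hp
    exact fun h => h1 h.symm
  · simp only [Finset.mem_sigma, Finset.mem_erase, Finset.mem_univ, true_and, and_true] at hp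
    obtain ⟨h1, h2, h3⟩ := hp
    exact fun h => h3 h.symm
  · simp only [Finset.mem_sigma, Finset.mem_erase, Finset.mem_univ, true_and, and_true] at hp
    obtain ⟨h1, h2, h3⟩ := hp
    exact fun h => h2 h.symm
  · intro τ _
    simp only [Finset.mem_sigma, Finset.mem_univ, Finset.mem_erase, true_and, and_true]
    refine ⟨fun h => ?_, fun h => ?_, fun h => ?_⟩
    · have := τ.injective h; simp at this
    · have := τ.injective h; simp at this
    · have := τ.injective h; simp at this
  · intro p hp; exact Finset.mem_univ _
  · intro τ _; ext a; fin_cases a <;> rfl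
  · intro p hp; rfl
  · intro τ _; rfl

lemma card1 {N : ℕ} : (Fintype.card (Fin 1 ↪ Fin N) : ℝ) = N := by
  rw [Fintype.card_embedding_eq]
  simp [Nat.descFactorial]

lemma card2 {N : ℕ} (hN : 2 ≤ N) : (Fintype.card (Fin 2 ↪ Fin N) : ℝ) = N * ((N:ℝ) - 1) := by
  rw [Fintype.card_embedding_eq]
  simp only [Fintype.card_fin, Nat.descFactorial, Nat.sub_zero]
  push_cast [Nat.cast_sub (by omega : 1 ≤ N)]
  ring

lemma card3 {N : ℕ} (hN : 3 ≤ N) : (Fintype.card (Fin 3 ↪ Fin N) : ℝ)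
    = N * ((N:ℝ) - 1) * ((N:ℝ) - 2) := by
  rw [Fintype.card_embedding_eq]
  simp only [Fintype.card_fin, Nat.descFactorial, Nat.sub_zero]
  push_cast [Nat.cast_sub (by omega : 1 ≤ N), Nat.cast_sub (by omega : 2 ≤ N)]
  ring

lemma S1lem {N n : ℕ} (hN : 1 ≤ N) (f : Fin N → ℝ) (i : Fin n) :
    ∑ σ : Fin n ↪ Fin N, f (σ i)
      = (Fintype.card (Fin n ↪ Fin N) : ℝ) / N * ∑ j, f j := by
  have h := master 1 hN (emb1 i) (fun τ => f (τ 0))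
  have he : ∀ σ : Fin n ↪ Fin N, ((emb1 i).trans σ) 0 = σ i := fun σ => rfl
  rw [Finset.sum_congr rfl (fun σ _ => by rw [he σ])] at h
  rw [h, card1, sum_emb1 f]

lemma S2lem {N n : ℕ} (hN : 2 ≤ N) (f g : Fin N → ℝ) {i i' : Fin n} (h : i ≠ i') :
    ∑ σ : Fin n ↪ Fin N, f (σ i) * g (σ i')
      = (Fintype.card (Fin n ↪ Fin N) : ℝ) / (N * ((N:ℝ) - 1))
        * ∑ j, ∑ k ∈ univ.erase j, f j * g k := by
  have hm := master 2 hN (emb2 i i' h) (fun τ => f (τ 0) * g (τ 1))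
  have he : ∀ σ : Fin n ↪ Fin N,
      f (((emb2 i i' h).trans σ) 0) * g (((emb2 i i' h).trans σ) 1) = f (σ i) * g (σ i') :=
    fun σ => rfl
  rw [Finset.sum_congr rfl (fun σ _ => he σ)] at hm
  rw [hm, card2 hN, sum_emb2 (fun j k => f j * g k)]

lemma S3lem {N n : ℕ} (hN : 3 ≤ N) (f g h : Fin N → ℝ) {i i' i'' : Fin n}
    (h1 : i ≠ i') (h2 : i ≠ i'') (h3 : i' ≠ i'') :
    ∑ σ : Fin n ↪ Fin N, f (σ i) * g (σ i') * h (σ i'')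
      = (Fintype.card (Fin n ↪ Fin N) : ℝ) / (N * ((N:ℝ) - 1) * ((N:ℝ) - 2))
        * ∑ j, ∑ k ∈ univ.erase j, ∑ l ∈ (univ.erase j).erase k, f j * g k * h l := by
  have hm := master 3 hN (emb3 i i' i'' h1 h2 h3) (fun τ => f (τ 0) * g (τ 1) * h (τ 2))
  have he : ∀ σ : Fin n ↪ Fin N,
      f (((emb3 i i' i'' h1 h2 h3).trans σ) 0) * g (((emb3 i i' i'' h1 h2 h3).trans σ) 1)
        * h (((emb3 i i' i'' h1 h2 h3).trans σ) 2) = f (σ i) * g (σ i') * h (σ i'') :=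
    fun σ => rfl
  rw [Finset.sum_congr rfl (fun σ _ => he σ)] at hm
  rw [hm, card3 hN, sum_emb3 (fun j k l => f j * g k * h l)]

lemma expand_cube {n : ℕ} (hn : (n:ℝ) ≠ 0) (a : Fin n → ℝ) :
    (∑ i, (a i - (∑ i', a i') / n) ^ 3) / n
      = (1/(n:ℝ)) * ∑ i, a i ^ 3 - (3/(n:ℝ)^2) * ((∑ i, a i) * (∑ i, a i ^ 2))
          + (2/(n:ℝ)^3) * (∑ i, a i) ^ 3 := by
  have h : ∑ i, (a i - (∑ i', a i') / n) ^ 3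
      = ∑ i, (a i ^ 3 - (3*(∑ i', a i')/n) * a i ^ 2 + (3*((∑ i', a i')/n)^2) * a i
          - ((∑ i', a i')/n)^3) :=
    Finset.sum_congr rfl fun i _ => by ring
  rw [h, Finset.sum_sub_distrib, Finset.sum_add_distrib, Finset.sum_sub_distrib,
    ← Finset.mul_sum, ← Finset.mul_sum, Finset.sum_const, card_univ, Fintype.card_fin,
    nsmul_eq_mul]
  field_simp
  ring

end SRS3

open SRS3 in
/-- `E μ̂₃ = ((1-n⁻¹)(1-2n⁻¹))/((1-N⁻¹)(1-2N⁻¹)) μ₃` under SRSWOR. -/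
theorem srs_expect_mu3 (N n : ℕ) (hn : 3 ≤ n) (hN : 3 ≤ N) (hnN : n ≤ N)
    (x : Fin N → ℝ) :
    srsExp N n (fun σ => (∑ i, (x (σ i) - (∑ i', x (σ i')) / n) ^ 3) / n)
      = ((1 - (n : ℝ)⁻¹) * (1 - 2 * (n : ℝ)⁻¹))
          / ((1 - (N : ℝ)⁻¹) * (1 - 2 * (N : ℝ)⁻¹))
        * ((∑ j, (x j - (∑ j', x j') / N) ^ 3) / N) := by
  classical
  have hnR3 : (3:ℝ) ≤ (n:ℝ) := by exact_mod_cast hn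
  have hNR3 : (3:ℝ) ≤ (N:ℝ) := by exact_mod_cast hN
  have hnR : (n:ℝ) ≠ 0 := by linarith
  have hNR : (N:ℝ) ≠ 0 := by linarith
  have hN1 : (N:ℝ) - 1 ≠ 0 := by linarith
  have hN2 : (N:ℝ) - 2 ≠ 0 := by linarith
  have hN1' : 1 ≤ N := by omega
  have hN2' : 2 ≤ N := by omega
  set E : ℝ := (Fintype.card (Fin n ↪ Fin N) : ℝ) with hE
  have hEne : E ≠ 0 := by
    have h0 : 0 < Fintype.card (Fin n ↪ Fin N) := by
      rw [Fintype.card_embedding_eq]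
      simp only [Fintype.card_fin]
      exact Nat.pos_of_ne_zero fun h =>
        absurd (Nat.descFactorial_eq_zero_iff_lt.mp h) (not_lt.mpr hnN)
    rw [hE]
    exact_mod_cast Nat.pos_iff_ne_zero.mp h0
  set μ : ℝ := (∑ j, x j) / N with hμ
  set y : Fin N → ℝ := fun j => x j - μ with hy
  have hy0 : ∑ j, y j = 0 := by
    simp only [hy]
    rw [Finset.sum_sub_distrib, Finset.sum_const, card_univ, Fintype.card_fin, nsmul_eq_mul, hμ]
    field_simp
    simp
  set S3 : ℝ := ∑ j, y j ^ 3 with hS3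
  -- index identities
  have idA : ∑ j, y j * y j ^ 2 = S3 := Finset.sum_congr rfl fun j _ => by ring
  have idC : ∑ j, y j * y j * y j = S3 := Finset.sum_congr rfl fun j _ => by ring
  have erase_sub : ∀ (f : Fin N → ℝ) (j : Fin N),
      ∑ k ∈ univ.erase j, f k = (∑ k, f k) - f j := by
    intro f j
    have := Finset.sum_erase_add univ f (mem_univ j)
    linarith
  have idB : ∑ j, ∑ k ∈ univ.erase j, y j * y k ^ 2 = -S3 := by
    have h : ∀ j : Fin N, ∑ k ∈ univ.erase j, y j * y k ^ 2
        = y j * (∑ k, y k ^ 2) - y j * y j ^ 2 := by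
      intro j
      rw [← Finset.mul_sum, erase_sub (fun k => y k ^ 2) j]
      ring
    rw [Finset.sum_congr rfl fun j _ => h j, Finset.sum_sub_distrib, ← Finset.sum_mul, hy0, idA]
    ring
  have idD : ∑ j, ∑ k ∈ univ.erase j, y j * y j * y k = -S3 := by
    have h : ∀ j : Fin N, ∑ k ∈ univ.erase j, y j * y j * y k
        = y j * y j * (∑ k, y k) - y j * y j * y j := by
      intro j
      rw [← Finset.mul_sum, erase_sub y j]
      ring
    rw [Finset.sum_congr rfl fun j _ => h j, Finset.sum_sub_distrib, hy0, idC]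
    simp
  have idE : ∑ j, ∑ k ∈ univ.erase j, y j * (y k * y k) = -S3 := by
    have h : ∀ j : Fin N, ∑ k ∈ univ.erase j, y j * (y k * y k)
        = y j * (∑ k, y k * y k) - y j * (y j * y j) := by
      intro j
      rw [← Finset.mul_sum, erase_sub (fun k => y k * y k) j]
      ring
    have h2 : ∑ j, y j * (y j * y j) = S3 := Finset.sum_congr rfl fun j _ => by ring
    rw [Finset.sum_congr rfl fun j _ => h j, Finset.sum_sub_distrib, ← Finset.sum_mul, hy0, h2]
    ring
  have idF : ∑ j, ∑ k ∈ univ.erase j, ∑ l ∈ (univ.erase j).erase k, y j * y k * y l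
      = 2 * S3 := by
    have h : ∀ j : Fin N, ∀ k ∈ univ.erase j,
        ∑ l ∈ (univ.erase j).erase k, y j * y k * y l
          = - (y j * y j * y k) - y j * (y k * y k) := by
      intro j k hk
      rw [← Finset.mul_sum]
      have hk' : ∑ l ∈ (univ.erase j).erase k, y l = - y j - y k := by
        have e1 := Finset.sum_erase_add (univ.erase j) y hk
        have e2 : ∑ l ∈ univ.erase j, y l = - y j := by
          rw [erase_sub y j, hy0]; ring
        linarith
      rw [hk']
      ring
    have hsum : ∀ j : Fin N, ∑ k ∈ univ.erase j,
        ∑ l ∈ (univ.erase j).erase k, y j * y k * y l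
          = - (∑ k ∈ univ.erase j, y j * y j * y k)
            - (∑ k ∈ univ.erase j, y j * (y k * y k)) := by
      intro j
      rw [Finset.sum_congr rfl (h j)]
      rw [Finset.sum_sub_distrib, Finset.sum_neg_distrib]
    rw [Finset.sum_congr rfl fun j _ => hsum j, Finset.sum_sub_distrib, Finset.sum_neg_distrib,
      idD, idE]
    ring
  -- per-σ sums
  have key1 : ∑ σ : Fin n ↪ Fin N, ∑ i, y (σ i) ^ 3 = (n:ℝ) * (E / N * S3) := by
    rw [Finset.sum_comm]
    rw [Finset.sum_congr rfl fun i _ => S1lem hN1' (fun j => y j ^ 3) i]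
    rw [Finset.sum_const, card_univ, Fintype.card_fin, nsmul_eq_mul, ← hS3, ← hE]
  have key2 : ∑ σ : Fin n ↪ Fin N, (∑ i, y (σ i)) * (∑ i, y (σ i) ^ 2)
      = (n:ℝ) * (E / N * S3) + (n:ℝ) * ((n:ℝ) - 1) * (E / (N * ((N:ℝ)-1)) * (-S3)) := by
    have h1 : ∀ σ : Fin n ↪ Fin N, (∑ i, y (σ i)) * (∑ i, y (σ i) ^ 2)
        = ∑ i, ∑ i', y (σ i) * y (σ i') ^ 2 := fun σ => Finset.sum_mul_sum _ _ _ _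
    rw [Finset.sum_congr rfl fun σ _ => h1 σ, Finset.sum_comm]
    have h2 : ∀ i : Fin n, ∑ σ : Fin n ↪ Fin N, ∑ i', y (σ i) * y (σ i') ^ 2
        = E / N * S3 + ((n:ℝ) - 1) * (E / (N * ((N:ℝ)-1)) * (-S3)) := by
      intro i
      rw [Finset.sum_comm]
      have hsplit : ∑ i' : Fin n, ∑ σ : Fin n ↪ Fin N, y (σ i) * y (σ i') ^ 2
          = (∑ σ : Fin n ↪ Fin N, y (σ i) * y (σ i) ^ 2)
            + ∑ i' ∈ univ.erase i, ∑ σ : Fin n ↪ Fin N, y (σ i) * y (σ i') ^ 2 :=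
        (Finset.add_sum_erase univ _ (mem_univ i)).symm
      rw [hsplit]
      have hdiag : ∑ σ : Fin n ↪ Fin N, y (σ i) * y (σ i) ^ 2 = E / N * S3 := by
        rw [show (∑ σ : Fin n ↪ Fin N, y (σ i) * y (σ i) ^ 2)
            = ∑ σ : Fin n ↪ Fin N, (fun j => y j * y j ^ 2) (σ i) from rfl,
          S1lem hN1' (fun j => y j * y j ^ 2) i, idA, ← hE]
      have hoff : ∀ i' ∈ univ.erase i, ∑ σ : Fin n ↪ Fin N, y (σ i) * y (σ i') ^ 2
          = E / (N * ((N:ℝ)-1)) * (-S3) := by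
        intro i' hi'
        have hne : i ≠ i' := fun h => (Finset.mem_erase.mp hi').1 h.symm
        rw [show (∑ σ : Fin n ↪ Fin N, y (σ i) * y (σ i') ^ 2)
            = ∑ σ : Fin n ↪ Fin N, (fun j => y j) (σ i) * (fun k => y k ^ 2) (σ i') from rfl,
          S2lem hN2' (fun j => y j) (fun k => y k ^ 2) hne, idB, ← hE]
      rw [Finset.sum_congr rfl hoff, Finset.sum_const, Finset.card_erase_of_mem (mem_univ i),
        card_univ, Fintype.card_fin, nsmul_eq_mul, hdiag]
      congr 1
      congr 1
      push_cast [Nat.cast_sub (by omega : 1 ≤ n)]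
      ring
    rw [Finset.sum_congr rfl fun i _ => h2 i, Finset.sum_const, card_univ, Fintype.card_fin,
      nsmul_eq_mul]
    ring
  have key3 : ∑ σ : Fin n ↪ Fin N, (∑ i, y (σ i)) ^ 3
      = (n:ℝ) * (E / N * S3)
        + 3 * ((n:ℝ) * ((n:ℝ) - 1) * (E / (N * ((N:ℝ)-1)) * (-S3)))
        + (n:ℝ) * ((n:ℝ) - 1) * ((n:ℝ) - 2)
            * (E / (N * ((N:ℝ)-1) * ((N:ℝ)-2)) * (2 * S3)) := by
    have hcube : ∀ σ : Fin n ↪ Fin N, (∑ i, y (σ i)) ^ 3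
        = ∑ i, ∑ i', ∑ i'', y (σ i) * y (σ i') * y (σ i'') := by
      intro σ
      rw [pow_succ, pow_two, Finset.sum_mul_sum, Finset.sum_mul]
      refine Finset.sum_congr rfl fun i _ => ?_
      rw [Finset.sum_mul]
      refine Finset.sum_congr rfl fun i' _ => ?_
      rw [Finset.mul_sum]
    rw [Finset.sum_congr rfl fun σ _ => hcube σ, Finset.sum_comm]
    have hper_i : ∀ i : Fin n,
        ∑ σ : Fin n ↪ Fin N, ∑ i', ∑ i'', y (σ i) * y (σ i') * y (σ i'')
          = (E / N * S3)
            + 3 * (((n:ℝ) - 1) * (E / (N * ((N:ℝ)-1)) * (-S3)))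
            + ((n:ℝ) - 1) * ((n:ℝ) - 2)
                * (E / (N * ((N:ℝ)-1) * ((N:ℝ)-2)) * (2 * S3)) := by
      intro i
      rw [Finset.sum_comm]
      have hsplit1 : ∑ i' : Fin n, ∑ σ : Fin n ↪ Fin N, ∑ i'', y (σ i) * y (σ i') * y (σ i'')
          = (∑ σ : Fin n ↪ Fin N, ∑ i'', y (σ i) * y (σ i) * y (σ i''))
            + ∑ i' ∈ univ.erase i, ∑ σ : Fin n ↪ Fin N, ∑ i'', y (σ i) * y (σ i') * y (σ i'') :=
        (Finset.add_sum_erase univ _ (mem_univ i)).symm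
      rw [hsplit1]
      -- diagonal i' = i branch
      have hbr1 : ∑ σ : Fin n ↪ Fin N, ∑ i'', y (σ i) * y (σ i) * y (σ i'')
          = (E / N * S3) + ((n:ℝ) - 1) * (E / (N * ((N:ℝ)-1)) * (-S3)) := by
        rw [Finset.sum_comm]
        have hsplit2 : ∑ i'' : Fin n, ∑ σ : Fin n ↪ Fin N, y (σ i) * y (σ i) * y (σ i'')
            = (∑ σ : Fin n ↪ Fin N, y (σ i) * y (σ i) * y (σ i))
              + ∑ i'' ∈ univ.erase i, ∑ σ : Fin n ↪ Fin N, y (σ i) * y (σ i) * y (σ i'') :=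
          (Finset.add_sum_erase univ _ (mem_univ i)).symm
        rw [hsplit2]
        have hd : ∑ σ : Fin n ↪ Fin N, y (σ i) * y (σ i) * y (σ i) = E / N * S3 := by
          rw [show (∑ σ : Fin n ↪ Fin N, y (σ i) * y (σ i) * y (σ i))
              = ∑ σ : Fin n ↪ Fin N, (fun j => y j * y j * y j) (σ i) from rfl,
            S1lem hN1' (fun j => y j * y j * y j) i, idC, ← hE]
        have ho : ∀ i'' ∈ univ.erase i, ∑ σ : Fin n ↪ Fin N, y (σ i) * y (σ i) * y (σ i'')
            = E / (N * ((N:ℝ)-1)) * (-S3) := by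
          intro i'' hi''
          have hne : i ≠ i'' := fun h => (Finset.mem_erase.mp hi'').1 h.symm
          rw [show (∑ σ : Fin n ↪ Fin N, y (σ i) * y (σ i) * y (σ i''))
              = ∑ σ : Fin n ↪ Fin N, (fun j => y j * y j) (σ i) * (fun k => y k) (σ i'') from rfl,
            S2lem hN2' (fun j => y j * y j) (fun k => y k) hne, idD, ← hE]
        rw [Finset.sum_congr rfl ho, Finset.sum_const, Finset.card_erase_of_mem (mem_univ i),
          card_univ, Fintype.card_fin, nsmul_eq_mul, hd]
        congr 2
        push_cast [Nat.cast_sub (by omega : 1 ≤ n)]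
        ring
      rw [hbr1]
      -- off-diagonal i' ≠ i branch
      have hbr2 : ∀ i' ∈ univ.erase i,
          ∑ σ : Fin n ↪ Fin N, ∑ i'', y (σ i) * y (σ i') * y (σ i'')
            = 2 * (E / (N * ((N:ℝ)-1)) * (-S3))
              + ((n:ℝ) - 2) * (E / (N * ((N:ℝ)-1) * ((N:ℝ)-2)) * (2 * S3)) := by
        intro i' hi'
        have hne : i ≠ i' := fun h => (Finset.mem_erase.mp hi').1 h.symm
        rw [Finset.sum_comm]
        have hi'mem : i' ∈ univ.erase i := hi'
        have hsplit3 : ∑ i'' : Fin n, ∑ σ : Fin n ↪ Fin N, y (σ i) * y (σ i') * y (σ i'')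
            = (∑ σ : Fin n ↪ Fin N, y (σ i) * y (σ i') * y (σ i))
              + ∑ i'' ∈ univ.erase i, ∑ σ : Fin n ↪ Fin N, y (σ i) * y (σ i') * y (σ i'') :=
          (Finset.add_sum_erase univ _ (mem_univ i)).symm
        have hsplit4 : ∑ i'' ∈ univ.erase i,
              ∑ σ : Fin n ↪ Fin N, y (σ i) * y (σ i') * y (σ i'')
            = (∑ σ : Fin n ↪ Fin N, y (σ i) * y (σ i') * y (σ i'))
              + ∑ i'' ∈ (univ.erase i).erase i',
                  ∑ σ : Fin n ↪ Fin N, y (σ i) * y (σ i') * y (σ i'') :=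
          (Finset.add_sum_erase _ _ hi'mem).symm
        rw [hsplit3, hsplit4]
        have ht1 : ∑ σ : Fin n ↪ Fin N, y (σ i) * y (σ i') * y (σ i)
            = E / (N * ((N:ℝ)-1)) * (-S3) := by
          have hc : ∀ σ : Fin n ↪ Fin N, y (σ i) * y (σ i') * y (σ i)
              = (fun j => y j * y j) (σ i) * (fun k => y k) (σ i') := fun σ => by
            simp only; ring
          rw [Finset.sum_congr rfl fun σ _ => hc σ,
            S2lem hN2' (fun j => y j * y j) (fun k => y k) hne, idD, ← hE]
        have ht2 : ∑ σ : Fin n ↪ Fin N, y (σ i) * y (σ i') * y (σ i')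
            = E / (N * ((N:ℝ)-1)) * (-S3) := by
          have hc : ∀ σ : Fin n ↪ Fin N, y (σ i) * y (σ i') * y (σ i')
              = (fun j => y j) (σ i) * (fun k => y k * y k) (σ i') := fun σ => by
            simp only; ring
          rw [Finset.sum_congr rfl fun σ _ => hc σ,
            S2lem hN2' (fun j => y j) (fun k => y k * y k) hne, idE, ← hE]
        have ht3 : ∀ i'' ∈ (univ.erase i).erase i',
            ∑ σ : Fin n ↪ Fin N, y (σ i) * y (σ i') * y (σ i'')
              = E / (N * ((N:ℝ)-1) * ((N:ℝ)-2)) * (2 * S3) := by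
          intro i'' hi''
          have h2' : i ≠ i'' := fun h => ((Finset.mem_erase.mp (Finset.mem_erase.mp hi'').2).1) h.symm
          have h3' : i' ≠ i'' := fun h => (Finset.mem_erase.mp hi'').1 h.symm
          rw [show (∑ σ : Fin n ↪ Fin N, y (σ i) * y (σ i') * y (σ i''))
              = ∑ σ : Fin n ↪ Fin N,
                  (fun j => y j) (σ i) * (fun k => y k) (σ i') * (fun l => y l) (σ i'') from rfl,
            S3lem hN (fun j => y j) (fun k => y k) (fun l => y l) hne h2' h3', idF, ← hE]
        rw [Finset.sum_congr rfl ht3, Finset.sum_const, ht1, ht2]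
        have hcard2 : (((univ : Finset (Fin n)).erase i).erase i').card = n - 2 := by
          rw [Finset.card_erase_of_mem hi'mem, Finset.card_erase_of_mem (mem_univ i),
            card_univ, Fintype.card_fin]
          omega
        rw [hcard2, nsmul_eq_mul]
        push_cast [Nat.cast_sub (by omega : 2 ≤ n)]
        ring
      rw [Finset.sum_congr rfl hbr2, Finset.sum_const, Finset.card_erase_of_mem (mem_univ i),
        card_univ, Fintype.card_fin, nsmul_eq_mul]
      push_cast [Nat.cast_sub (by omega : 1 ≤ n)]
      ring
    rw [Finset.sum_congr rfl fun i _ => hper_i i, Finset.sum_const, card_univ, Fintype.card_fin,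
      nsmul_eq_mul]
    ring
  -- reduce statement to y
  have hswap : ∀ (σ : Fin n ↪ Fin N) (i : Fin n),
      x (σ i) - (∑ i', x (σ i')) / n = y (σ i) - (∑ i', y (σ i')) / n := by
    intro σ i
    simp only [hy]
    rw [Finset.sum_sub_distrib, Finset.sum_const, card_univ, Fintype.card_fin, nsmul_eq_mul]
    field_simp
    ring
  have hRHS : ∀ j, x j - (∑ j', x j') / N = y j := fun j => by simp only [hy, hμ]
  rw [srsExp]
  have hfun : ∀ σ : Fin n ↪ Fin N,
      (∑ i, (x (σ i) - (∑ i', x (σ i')) / n) ^ 3) / n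
        = (1/(n:ℝ)) * ∑ i, y (σ i) ^ 3
            - (3/(n:ℝ)^2) * ((∑ i, y (σ i)) * (∑ i, y (σ i) ^ 2))
            + (2/(n:ℝ)^3) * (∑ i, y (σ i)) ^ 3 := by
    intro σ
    rw [Finset.sum_congr rfl (fun i _ => by rw [hswap σ i])]
    exact expand_cube hnR (fun i => y (σ i))
  rw [Finset.sum_congr rfl fun σ _ => hfun σ]
  rw [Finset.sum_add_distrib, Finset.sum_sub_distrib, ← Finset.mul_sum, ← Finset.mul_sum,
    ← Finset.mul_sum, key1, key2, key3]
  have hgoal : (∑ j, (x j - μ) ^ 3) = S3 := by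
    rw [hS3]
  show _ = ((1 - (n : ℝ)⁻¹) * (1 - 2 * (n : ℝ)⁻¹))
          / ((1 - (N : ℝ)⁻¹) * (1 - 2 * (N : ℝ)⁻¹)) * ((∑ j, (x j - μ) ^ 3) / N)
  rw [hgoal, ← hE]
  field_simp
  ring
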